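/- For x ∈ (0, 1/2], the exponential integral satisfies the bound |−Ei(−x) − (−γ − log x)| ≤ x, where γ is the Euler–Mascheroni constant; equivalently −Ei(−x) = −γ − log x + O(x) as x → 0⁺. -/

import Mathlib

open MeasureTheory Set

/-- The exponential integral `Ei y` for `y < 0`, defined by
`Ei(-x) = -∫_x^∞ e^{-t}/t dt` for `x > 0`. -/
noncomputable def Ei (y : ℝ) : ℝ := -∫ t in Ioi (-y), Real.exp (-t) / t

section Aux

open Filter Real

-- integrability of exp(-t) * log t on Ioi 0
lemma intAux1 : IntegrableOn (fun t : ℝ => Real.exp (-t) * Real.log t) (Ioi 0) := by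
  rw [show Ioi (0:ℝ) = Ioc 0 1 ∪ Ioi 1 from (Ioc_union_Ioi_eq_Ioi zero_le_one).symm]
  apply IntegrableOn.union
  · -- near 0 : bound by 2 * t ^ (-1/2 : ℝ)
    have hmeas : AEStronglyMeasurable (fun t : ℝ => Real.exp (-t) * Real.log t)
        (volume.restrict (Ioc (0:ℝ) 1)) := by
      apply ContinuousOn.aestronglyMeasurable _ measurableSet_Ioc
      exact (Real.continuous_exp.comp continuous_neg).continuousOn.mul
        (Real.continuousOn_log.mono (fun t ht => ne_of_gt ht.1))
    have hint : IntegrableOn (fun t : ℝ => 2 * t ^ (-(1/2) : ℝ)) (Ioc (0:ℝ) 1) := by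
      have this1 : IntervalIntegrable (fun t : ℝ => t ^ (-(1/2) : ℝ)) volume 0 1 :=
        intervalIntegral.intervalIntegrable_rpow' (by norm_num)
      rw [intervalIntegrable_iff_integrableOn_Ioc_of_le zero_le_one] at this1
      exact this1.const_mul 2
    refine hint.mono' hmeas ?_
    filter_upwards [ae_restrict_mem measurableSet_Ioc] with t ht
    have ht0 : 0 < t := ht.1
    have ht1 : t ≤ 1 := ht.2
    rw [norm_mul, Real.norm_eq_abs, Real.norm_eq_abs]
    have h1 : |Real.exp (-t)| ≤ 1 := by
      rw [abs_of_pos (Real.exp_pos _)]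
      exact Real.exp_le_one_iff.mpr (by linarith)
    have h2 : |Real.log t| ≤ 2 * t ^ (-(1/2) : ℝ) := by
      rw [abs_of_nonpos (Real.log_nonpos ht0.le ht1)]
      have hs : (0:ℝ) < t ^ ((1:ℝ)/2) := Real.rpow_pos_of_pos ht0 _
      have : -Real.log t = 2 * (-Real.log (t ^ ((1:ℝ)/2))) := by
        rw [Real.log_rpow ht0]; ring
      rw [this, Real.rpow_neg ht0.le]
      have := Real.add_one_le_exp (-Real.log (t ^ ((1:ℝ)/2)))
      rw [Real.exp_neg, Real.exp_log hs] at this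
      have h3 : -Real.log (t ^ ((1:ℝ)/2)) ≤ (t ^ ((1:ℝ)/2))⁻¹ := by linarith
      calc 2 * -Real.log (t ^ ((1:ℝ)/2)) ≤ 2 * (t ^ ((1:ℝ)/2))⁻¹ := by linarith
        _ = 2 * (t ^ ((1:ℝ)/2))⁻¹ := rfl
    calc |Real.exp (-t)| * |Real.log t| ≤ 1 * (2 * t ^ (-(1/2):ℝ)) := by
          apply mul_le_mul h1 _ (abs_nonneg _) zero_le_one
          rw [Real.rpow_neg ht0.le] at h2 ⊢; exact h2
      _ = 2 * t ^ (-(1/2):ℝ) := one_mul _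
  · -- on Ioi 1 : bound by exp(-t) * t
    have hG := Real.GammaIntegral_convergent (s := 2) (by norm_num)
    have hG' : IntegrableOn (fun t : ℝ => Real.exp (-t) * t ^ ((2:ℝ) - 1)) (Ioi 1) :=
      hG.mono_set (Ioi_subset_Ioi zero_le_one)
    refine hG'.mono' ?_ ?_
    · apply ContinuousOn.aestronglyMeasurable _ measurableSet_Ioi
      exact (Real.continuous_exp.comp continuous_neg).continuousOn.mul
        (Real.continuousOn_log.mono (fun t ht => ne_of_gt (lt_trans zero_lt_one ht)))
    · filter_upwards [ae_restrict_mem measurableSet_Ioi] with t ht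
      have ht1 : (1:ℝ) < t := ht
      have ht0 : (0:ℝ) < t := lt_trans zero_lt_one ht1
      rw [norm_mul, Real.norm_eq_abs, Real.norm_eq_abs, abs_of_pos (Real.exp_pos _),
        abs_of_nonneg (Real.log_nonneg ht1.le)]
      have : Real.log t ≤ t := (Real.log_le_sub_one_of_pos ht0).trans (by linarith)
      calc Real.exp (-t) * Real.log t ≤ Real.exp (-t) * t :=
            mul_le_mul_of_nonneg_left this (Real.exp_pos _).le
        _ ≤ Real.exp (-t) * t ^ ((2:ℝ)-1) := by
            norm_num

lemma gammaIdent : ∫ t in Ioi (0:ℝ), Real.exp (-t) * Real.log t = -Real.eulerMascheroniConstant := by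
  have hD := Complex.hasDerivAt_GammaIntegral (s := 1) (by norm_num)
  have hEq : Complex.Gamma =ᶠ[nhds (1:ℂ)] Complex.GammaIntegral := by
    have hopen : IsOpen {s : ℂ | 0 < s.re} := isOpen_lt continuous_const Complex.continuous_re
    filter_upwards [hopen.mem_nhds (by norm_num : (0:ℝ) < (1:ℂ).re)] with s hs
    exact Complex.Gamma_eq_integral hs
  have hD' : HasDerivAt Complex.Gamma
      (∫ t : ℝ in Ioi 0, (t:ℂ) ^ ((1:ℂ) - 1) * (Real.log t * Real.exp (-t))) 1 :=
    hD.congr_of_eventuallyEq hEq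
  have hD'' : HasDerivAt Complex.Gamma
      (∫ t : ℝ in Ioi 0, (t:ℂ) ^ ((1:ℂ) - 1) * (Real.log t * Real.exp (-t))) ((1:ℝ):ℂ) := by
    rwa [Complex.ofReal_one]
  have hre := hD''.real_of_complex
  have hgam : HasDerivAt (fun x : ℝ => (Complex.Gamma (x:ℂ)).re) (-Real.eulerMascheroniConstant) 1 := by
    apply Real.hasDerivAt_Gamma_one.congr_of_eventuallyEq
    filter_upwards with x
    rw [Complex.Gamma_ofReal, Complex.ofReal_re]
  have huniq := hre.unique hgam
  rw [← huniq]
  have : (∫ t : ℝ in Ioi 0, (t:ℂ) ^ ((1:ℂ) - 1) * (Real.log t * Real.exp (-t)))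
      = ((∫ t : ℝ in Ioi 0, Real.exp (-t) * Real.log t : ℝ) : ℂ) := by
    calc (∫ t : ℝ in Ioi 0, (t:ℂ) ^ ((1:ℂ) - 1) * (Real.log t * Real.exp (-t)))
        = ∫ t : ℝ in Ioi 0, ((Real.exp (-t) * Real.log t : ℝ) : ℂ) := by
          apply setIntegral_congr_fun measurableSet_Ioi
          intro t ht
          push_cast
          simp [mul_comm]
      _ = ((∫ t : ℝ in Ioi 0, Real.exp (-t) * Real.log t : ℝ) : ℂ) := integral_ofReal
  rw [this, Complex.ofReal_re]

-- integrability of exp(-t)/t on Ioi x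
lemma intAux2 {x : ℝ} (hx0 : 0 < x) : IntegrableOn (fun t : ℝ => Real.exp (-t) / t) (Ioi x) := by
  have hbound : IntegrableOn (fun t : ℝ => x⁻¹ * Real.exp (-1 * t)) (Ioi x) :=
    ((exp_neg_integrableOn_Ioi x (by norm_num : (0:ℝ) < 1))).const_mul _
  refine hbound.mono' ?_ ?_
  · apply ContinuousOn.aestronglyMeasurable _ measurableSet_Ioi
    exact (Real.continuous_exp.comp continuous_neg).continuousOn.div continuousOn_id
      (fun t ht => ne_of_gt (lt_trans hx0 ht))
  · filter_upwards [ae_restrict_mem measurableSet_Ioi] with t ht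
    have ht0 : 0 < t := lt_trans hx0 ht
    rw [Real.norm_eq_abs, abs_of_pos (div_pos (Real.exp_pos _) ht0), neg_one_mul]
    rw [div_eq_inv_mul]
    apply mul_le_mul _ le_rfl (Real.exp_pos _).le (inv_nonneg.mpr hx0.le)
    exact inv_anti₀ hx0 ht.le

-- integrability of (1 - exp(-t))/t on Ioc 0 x
lemma intAux3 {x : ℝ} (hx0 : 0 < x) :
    IntegrableOn (fun t : ℝ => (1 - Real.exp (-t)) / t) (Ioc 0 x) := by
  refine Integrable.mono' (g := fun _ : ℝ => (1:ℝ)) (integrableOn_const measure_Ioc_lt_top.ne) ?_ ?_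
  · apply ContinuousOn.aestronglyMeasurable _ measurableSet_Ioc
    exact ((continuous_const.sub (Real.continuous_exp.comp continuous_neg)).continuousOn).div
      continuousOn_id (fun t ht => ne_of_gt ht.1)
  · filter_upwards [ae_restrict_mem measurableSet_Ioc] with t ht
    have ht0 : 0 < t := ht.1
    have h1 : 0 ≤ 1 - Real.exp (-t) := by
      have := Real.exp_le_one_iff.mpr (by linarith : -t ≤ 0)
      linarith
    have h2 : 1 - Real.exp (-t) ≤ t := by
      have := Real.add_one_le_exp (-t)
      linarith
    rw [Real.norm_eq_abs, abs_of_nonneg (div_nonneg h1 ht0.le)]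
    rw [div_le_one ht0]
    exact h2

-- FTC on Ioi x
lemma ftcIoi {x : ℝ} (hx0 : 0 < x) :
    ∫ t in Ioi x, Real.exp (-t) / t
      = -(Real.exp (-x) * Real.log x) + ∫ t in Ioi x, Real.exp (-t) * Real.log t := by
  have hderiv : ∀ t ∈ Ioi x, HasDerivAt (fun t : ℝ => Real.exp (-t) * Real.log t)
      (Real.exp (-t) / t - Real.exp (-t) * Real.log t) t := by
    intro t ht
    have ht0 : 0 < t := lt_trans hx0 ht
    have h1 : HasDerivAt (fun t : ℝ => Real.exp (-t)) (-Real.exp (-t)) t := by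
      simpa using ((hasDerivAt_neg t).exp)
    have : HasDerivAt (fun t : ℝ => Real.exp (-t) * Real.log t)
        (-Real.exp (-t) * Real.log t + Real.exp (-t) * t⁻¹) t :=
      h1.mul (Real.hasDerivAt_log (ne_of_gt ht0))
    convert this using 1
    simp only [div_eq_mul_inv]
    ring
  have hint : IntegrableOn (fun t : ℝ => Real.exp (-t) / t - Real.exp (-t) * Real.log t)
      (Ioi x) := (intAux2 hx0).sub (intAux1.mono_set (Ioi_subset_Ioi hx0.le))
  have htends : Tendsto (fun t : ℝ => Real.exp (-t) * Real.log t) atTop (nhds 0) := by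
    have h := tendsto_rpow_mul_exp_neg_mul_atTop_nhds_zero 1 1 one_pos
    apply squeeze_zero_norm' _ h
    filter_upwards [eventually_ge_atTop (1:ℝ)] with t ht
    rw [Real.norm_eq_abs, abs_mul, abs_of_pos (Real.exp_pos _),
      abs_of_nonneg (Real.log_nonneg ht)]
    have ht0 : 0 < t := lt_of_lt_of_le zero_lt_one ht
    have hlog : Real.log t ≤ t := (Real.log_le_sub_one_of_pos ht0).trans (by linarith)
    rw [Real.rpow_one, neg_one_mul]
    calc Real.exp (-t) * Real.log t ≤ Real.exp (-t) * t :=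
          mul_le_mul_of_nonneg_left hlog (Real.exp_pos _).le
      _ = t * Real.exp (-t) := mul_comm _ _
  have hcont : ContinuousWithinAt (fun t : ℝ => Real.exp (-t) * Real.log t) (Ici x) x := by
    apply ContinuousAt.continuousWithinAt
    exact ((Real.continuous_exp.comp continuous_neg).continuousAt).mul
      (Real.continuousAt_log (ne_of_gt hx0))
  have := integral_Ioi_of_hasDerivAt_of_tendsto hcont hderiv hint htends
  have hsub : (∫ t in Ioi x, (Real.exp (-t) / t - Real.exp (-t) * Real.log t))
      = (∫ t in Ioi x, Real.exp (-t) / t) - ∫ t in Ioi x, Real.exp (-t) * Real.log t :=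
    integral_sub (intAux2 hx0) (intAux1.mono_set (Ioi_subset_Ioi hx0.le))
  rw [hsub] at this
  rw [zero_sub] at this
  linarith [this]

lemma iocIdent {x : ℝ} (hx0 : 0 < x) (hx1 : x < 1) :
    ∫ t in Ioc 0 x, (1 - Real.exp (-t)) / t
      = (1 - Real.exp (-x)) * Real.log x - ∫ t in Ioc 0 x, Real.exp (-t) * Real.log t := by
  set g : ℝ → ℝ := fun t => Real.exp (-t) * Real.log t + (1 - Real.exp (-t)) / t with hg
  set G : ℝ → ℝ := fun t => (1 - Real.exp (-t)) * Real.log t with hG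
  set ε : ℕ → ℝ := fun n => x / (n + 1) with hε
  have hεpos : ∀ n, 0 < ε n := fun n => div_pos hx0 (by positivity)
  have hεle : ∀ n, ε n ≤ x := by
    intro n
    rw [hε]
    apply div_le_self hx0.le
    simp only [le_add_iff_nonneg_left]
    positivity
  have hεtend : Tendsto ε atTop (nhds 0) := by
    apply Tendsto.div_atTop tendsto_const_nhds
    exact tendsto_atTop_add_const_right _ 1 tendsto_natCast_atTop_atTop
  -- the monotone family of sets
  set s : ℕ → Set ℝ := fun n => Ioc (ε n) x with hs
  have hsm : ∀ n, MeasurableSet (s n) := fun n => measurableSet_Ioc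
  have hmono : Monotone s := by
    intro n m hnm
    apply Ioc_subset_Ioc_left
    apply div_le_div_of_nonneg_left hx0.le (by positivity)
    exact_mod_cast Nat.succ_le_succ hnm
  have hUnion : ⋃ n, s n = Ioc 0 x := by
    ext t
    simp only [mem_iUnion, mem_Ioc, hs]
    constructor
    · rintro ⟨n, h1, h2⟩
      exact ⟨lt_trans (hεpos n) h1, h2⟩
    · rintro ⟨h1, h2⟩
      obtain ⟨n, hn⟩ := exists_nat_gt (x / t)
      refine ⟨n, ?_, h2⟩
      rw [hε, div_lt_iff₀ (by positivity)]
      rw [div_lt_iff₀ h1] at hn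
      nlinarith
  have hint1 : IntegrableOn (fun t : ℝ => Real.exp (-t) * Real.log t) (Ioc 0 x) :=
    intAux1.mono_set Ioc_subset_Ioi_self
  have hint2 := intAux3 hx0
  -- FTC on each [ε n, x]
  have hFTC : ∀ n, (∫ t in s n, Real.exp (-t) * Real.log t) + (∫ t in s n, (1 - Real.exp (-t)) / t)
      = G x - G (ε n) := by
    intro n
    have hle := hεle n
    have hderiv : ∀ t ∈ uIcc (ε n) x, HasDerivAt G (g t) t := by
      intro t ht
      rw [uIcc_of_le hle] at ht
      have ht0 : 0 < t := lt_of_lt_of_le (hεpos n) ht.1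
      have h1 : HasDerivAt (fun t : ℝ => 1 - Real.exp (-t)) (Real.exp (-t)) t := by
        simpa using ((hasDerivAt_neg t).exp).const_sub (1:ℝ)
      have := h1.mul (Real.hasDerivAt_log (ne_of_gt ht0))
      exact this
    have hcont : ContinuousOn g (uIcc (ε n) x) := by
      rw [uIcc_of_le hle]
      apply ContinuousOn.add
      · exact ((Real.continuous_exp.comp continuous_neg).continuousOn).mul
          (Real.continuousOn_log.mono (fun t ht => ne_of_gt (lt_of_lt_of_le (hεpos n) ht.1)))
      · exact ((continuous_const.sub (Real.continuous_exp.comp continuous_neg)).continuousOn).div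
          continuousOn_id (fun t ht => ne_of_gt (lt_of_lt_of_le (hεpos n) ht.1))
    have := intervalIntegral.integral_eq_sub_of_hasDerivAt
      (fun t ht => hderiv t ht) (hcont.intervalIntegrable)
    rw [intervalIntegral.integral_of_le hle] at this
    rw [← this, hs]
    rw [← integral_add (hint1.mono_set (Ioc_subset_Ioc_left (hεpos n).le))
      (hint2.mono_set (Ioc_subset_Ioc_left (hεpos n).le))]
  -- limits
  have hlim1 : Tendsto (fun n => ∫ t in s n, Real.exp (-t) * Real.log t) atTop
      (nhds (∫ t in Ioc 0 x, Real.exp (-t) * Real.log t)) := by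
    have := tendsto_setIntegral_of_monotone hsm hmono (hUnion ▸ hint1)
    rwa [hUnion] at this
  have hlim2 : Tendsto (fun n => ∫ t in s n, (1 - Real.exp (-t)) / t) atTop
      (nhds (∫ t in Ioc 0 x, (1 - Real.exp (-t)) / t)) := by
    have := tendsto_setIntegral_of_monotone hsm hmono (hUnion ▸ hint2)
    rwa [hUnion] at this
  have hGε : Tendsto (fun n => G (ε n)) atTop (nhds 0) := by
    have hmul : Tendsto (fun n => Real.log (ε n) * ε n) atTop (nhds 0) := by
      have h := tendsto_log_mul_rpow_nhdsGT_zero one_pos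
      simp only [Real.rpow_one] at h
      apply h.comp
      rw [tendsto_nhdsWithin_iff]
      exact ⟨hεtend, Eventually.of_forall (fun n => hεpos n)⟩
    apply squeeze_zero_norm _ (by simpa using hmul.norm)
    intro n
    have hε0 := hεpos n
    have hε1 : ε n < 1 := lt_of_le_of_lt (hεle n) hx1
    have h1 : 0 ≤ 1 - Real.exp (-ε n) := by
      have := Real.exp_le_one_iff.mpr (by linarith : -ε n ≤ 0)
      linarith
    have h2 : 1 - Real.exp (-ε n) ≤ ε n := by
      have := Real.add_one_le_exp (-ε n)
      linarith
    rw [hG]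
    simp only [Real.norm_eq_abs, abs_mul]
    calc |1 - Real.exp (-ε n)| * |Real.log (ε n)| ≤ ε n * |Real.log (ε n)| := by
          apply mul_le_mul_of_nonneg_right _ (abs_nonneg _)
          rw [abs_of_nonneg h1]; exact h2
      _ = |Real.log (ε n)| * |ε n| := by rw [abs_of_pos hε0]; ring
  have hfinal := (hlim1.add hlim2)
  have hfinal2 : Tendsto (fun n => G x - G (ε n)) atTop (nhds (G x - 0)) :=
    tendsto_const_nhds.sub hGε
  have heq := tendsto_nhds_unique (hfinal.congr (fun n => hFTC n)) hfinal2
  rw [sub_zero, hG] at heq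
  simp only at heq
  linarith

end Aux

/-- For `x ∈ (0, 1/2]`, `|(-Ei(-x)) - (-γ - log x)| ≤ x`, where `γ` is the
Euler–Mascheroni constant; i.e. `-Ei(-x) = -γ - log x + O(x)` as `x → 0⁺`. -/
theorem negEi_near_zero (x : ℝ) (hx0 : 0 < x) (hx : x ≤ 1 / 2) :
    |(-Ei (-x)) - (-Real.eulerMascheroniConstant - Real.log x)| ≤ x := by
  have hx1 : x < 1 := lt_of_le_of_lt hx (by norm_num)
  set B := ∫ t in Ioc 0 x, (1 - Real.exp (-t)) / t with hB
  have hsplit : (∫ t in Ioc 0 x, Real.exp (-t) * Real.log t)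
      + (∫ t in Ioi x, Real.exp (-t) * Real.log t)
      = -Real.eulerMascheroniConstant := by
    rw [← gammaIdent, ← setIntegral_union (Ioc_disjoint_Ioi le_rfl) measurableSet_Ioi
      (intAux1.mono_set Ioc_subset_Ioi_self) (intAux1.mono_set (Ioi_subset_Ioi hx0.le)),
      Ioc_union_Ioi_eq_Ioi hx0.le]
  have hEi : -Ei (-x) = ∫ t in Ioi x, Real.exp (-t) / t := by
    simp [Ei]
  have hkey : (-Ei (-x)) - (-Real.eulerMascheroniConstant - Real.log x) = B := by
    rw [hEi, ftcIoi hx0]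
    have hA := iocIdent hx0 hx1
    have hexp : Real.exp (-x) ≠ 0 := (Real.exp_pos _).ne'
    nlinarith [hsplit, hA]
  rw [hkey, abs_le]
  constructor
  · have : 0 ≤ B := by
      apply setIntegral_nonneg measurableSet_Ioc
      intro t ht
      have ht0 : 0 < t := ht.1
      have h1 : 0 ≤ 1 - Real.exp (-t) := by
        have := Real.exp_le_one_iff.mpr (by linarith : -t ≤ 0); linarith
      positivity
    linarith
  · have h1 : B ≤ ∫ _t in Ioc (0:ℝ) x, (1:ℝ) := by
      apply setIntegral_mono_on (intAux3 hx0)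
        (integrableOn_const measure_Ioc_lt_top.ne) measurableSet_Ioc
      intro t ht
      have ht0 : 0 < t := ht.1
      have h2 : 1 - Real.exp (-t) ≤ t := by
        have := Real.add_one_le_exp (-t); linarith
      rw [div_le_one ht0]
      exact h2
    have h2 : (∫ _t in Ioc (0:ℝ) x, (1:ℝ)) = x := by
      simp [Real.volume_Ioc]
      linarith
    linarith
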